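/- arXiv:2506.14656 — 2 statements merged into one kernel-verified Lean document; each statement's English description precedes it below -/
import Mathlib

section
/- For every complex number v with |v| < 1, the series Σ v^(c+d), taken over all pairs (c, d) of nonnegative integers with 3 dividing c + 2d, converges absolutely and equals (1 − v + v²) / ((1 − v)² (1 + v + v²)). -/
/-- For `|v| < 1`, the series `Σ v^(c+d)` over pairs `(c, d)` of nonnegative integers
with `3 ∣ c + 2d` converges absolutely and equals
`(1 − v + v²) / ((1 − v)² (1 + v + v²))`. -/
theorem stmt_9 (v : ℂ) (hv : ‖v‖ < 1) :
    Summable (fun p : ℕ × ℕ =>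
        ‖if 3 ∣ p.1 + 2 * p.2 then v ^ (p.1 + p.2) else 0‖) ∧
    ∑' p : ℕ × ℕ, (if 3 ∣ p.1 + 2 * p.2 then v ^ (p.1 + p.2) else 0) =
      (1 - v + v ^ 2) / ((1 - v) ^ 2 * (1 + v + v ^ 2)) := by
  have hv0 : (0:ℝ) ≤ ‖v‖ := norm_nonneg v
  have hgeo : Summable (fun n : ℕ => ‖v‖ ^ n) := summable_geometric_of_lt_one hv0 hv
  constructor
  · refine Summable.of_nonneg_of_le (f := fun p : ℕ × ℕ => ‖v‖ ^ p.1 * ‖v‖ ^ p.2)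
      (fun p => norm_nonneg _) ?_ ?_
    · intro p
      by_cases h : 3 ∣ p.1 + 2 * p.2
      · simp [h, norm_pow, pow_add]
      · simp [h]; positivity
    · exact hgeo.mul_of_nonneg hgeo (fun _ => by positivity) (fun _ => by positivity)
  · -- nonvanishing facts
    have h3 : ‖v ^ 3‖ < 1 := by
      rw [norm_pow]
      calc ‖v‖ ^ 3 ≤ ‖v‖ := pow_le_of_le_one hv0 hv.le (by norm_num)
        _ < 1 := hv
    have hne : (1 : ℂ) - v ^ 3 ≠ 0 := by
      intro h
      have : v ^ 3 = 1 := by linear_combination -h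
      rw [this] at h3; simp at h3
    have hfac : (1 - v) * (1 + v + v ^ 2) = 1 - v ^ 3 := by ring
    have h1 : (1 : ℂ) - v ≠ 0 := fun h => hne (by rw [← hfac, h, zero_mul])
    have h2 : (1 : ℂ) + v + v ^ 2 ≠ 0 := fun h => hne (by rw [← hfac, h, mul_zero])
    -- reindex
    set f : ℕ × ℕ → ℂ := fun p => if 3 ∣ p.1 + 2 * p.2 then v ^ (p.1 + p.2) else 0 with hf
    set F : ℕ × ℕ × Fin 3 → ℂ :=
      fun x => (v ^ 3) ^ x.1 * ((v ^ 3) ^ x.2.1 * v ^ (2 * x.2.2.val)) with hF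
    set g : ℕ × ℕ × Fin 3 → ℕ × ℕ := fun x => (3 * x.1 + x.2.2.val, 3 * x.2.1 + x.2.2.val)
      with hg
    have hginj : Function.Injective g := by
      rintro ⟨a, b, r⟩ ⟨a', b', r'⟩ h
      simp only [hg, Prod.mk.injEq] at h
      have hr := r.isLt
      have hr' := r'.isLt
      have e1 : a = a' := by omega
      have e2 : b = b' := by omega
      have e3 : r = r' := Fin.ext (by omega)
      simp [e1, e2, e3]
    have hsupp : Function.support f ⊆ Set.range g := by
      rintro ⟨c, d⟩ hp
      have h : 3 ∣ c + 2 * d := by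
        by_contra h
        exact hp (if_neg h)
      refine ⟨(c / 3, d / 3, ⟨c % 3, Nat.mod_lt _ (by norm_num)⟩), ?_⟩
      simp only [hg, Prod.mk.injEq]
      constructor <;> omega
    have hcomp : ∀ x, f (g x) = F x := by
      rintro ⟨a, b, r⟩
      simp only [hf, hg, hF]
      have hdvd : 3 ∣ (3 * a + r.val) + 2 * (3 * b + r.val) := by omega
      rw [if_pos hdvd, show (3 * a + r.val) + (3 * b + r.val) = 3 * a + (3 * b + 2 * r.val)
        by ring, pow_add, pow_add, pow_mul, pow_mul]
    have key : ∑' p : ℕ × ℕ, f p = ∑' x, F x := by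
      rw [← hginj.tsum_eq hsupp]
      exact tsum_congr hcomp
    -- summability pieces
    have hs1 : Summable (fun a : ℕ => ‖(v ^ 3) ^ a‖) := by
      simpa [norm_pow] using summable_geometric_of_lt_one (norm_nonneg (v^3)) h3
    have hs2 : Summable (fun x : ℕ × Fin 3 => ‖(v ^ 3) ^ x.1 * v ^ (2 * x.2.val)‖) :=
      Summable.mul_norm (f := fun a : ℕ => (v ^ 3) ^ a)
        (g := fun r : Fin 3 => v ^ (2 * r.val)) hs1 Summable.of_finite
    have e1 : ∑' x : ℕ × Fin 3, (v ^ 3) ^ x.1 * v ^ (2 * x.2.val)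
        = (1 - v ^ 3)⁻¹ * (1 + v ^ 2 + v ^ 4) := by
      rw [← tsum_mul_tsum_of_summable_norm (g := fun r : Fin 3 => v ^ (2 * r.val)) hs1
          Summable.of_finite,
        tsum_geometric_of_norm_lt_one h3, tsum_fintype]
      congr 1
      simp only [Fin.sum_univ_three]
      norm_num
    have e2 : ∑' x, F x = (1 - v ^ 3)⁻¹ * ((1 - v ^ 3)⁻¹ * (1 + v ^ 2 + v ^ 4)) := by
      rw [hF, ← tsum_mul_tsum_of_summable_norm hs1 hs2, tsum_geometric_of_norm_lt_one h3, e1]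
    rw [key, e2]
    field_simp
    ring
end

section
/- For every complex number v with |v| < 1, the series Σ v^(c+d), taken over all pairs (c, d) of nonnegative integers with (c, d) ≠ (0, 0) and 3 dividing c + 2d, converges absolutely and equals v² (1 + v − v²) / ((1 − v)² (1 + v + v²)). -/
/-- For `|v| < 1`, the series `Σ v^(c+d)` over pairs `(c, d)` of nonnegative integers
with `(c, d) ≠ (0, 0)` and `3 ∣ c + 2d` converges absolutely and equals
`v² (1 + v − v²) / ((1 − v)² (1 + v + v²))`. -/
theorem stmt_10 (v : ℂ) (hv : ‖v‖ < 1) :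
    Summable (fun p : ℕ × ℕ =>
        ‖if 3 ∣ p.1 + 2 * p.2 ∧ p ≠ (0, 0) then v ^ (p.1 + p.2) else 0‖) ∧
    ∑' p : ℕ × ℕ, (if 3 ∣ p.1 + 2 * p.2 ∧ p ≠ (0, 0) then v ^ (p.1 + p.2) else 0) =
      v ^ 2 * (1 + v - v ^ 2) / ((1 - v) ^ 2 * (1 + v + v ^ 2)) := by
  classical
  -- basic geometric facts
  have hvr : Summable (fun n : ℕ => ‖v‖ ^ n) :=
    summable_geometric_of_lt_one (norm_nonneg v) hv
  have hg : Summable (fun p : ℕ × ℕ => ‖v‖ ^ p.1 * ‖v‖ ^ p.2) :=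
    hvr.mul_of_nonneg hvr (fun n => by positivity) (fun n => by positivity)
  -- summability of norms (first conjunct)
  have hsum1 : Summable (fun p : ℕ × ℕ =>
      ‖if 3 ∣ p.1 + 2 * p.2 ∧ p ≠ (0, 0) then v ^ (p.1 + p.2) else 0‖) := by
    refine Summable.of_nonneg_of_le (fun p => norm_nonneg _) (fun p => ?_) hg
    rw [← pow_add]
    split
    · rw [norm_pow]
    · simp only [norm_zero]; positivity
  refine ⟨hsum1, ?_⟩
  -- the full function without the (0,0) exclusion
  set F : ℕ × ℕ → ℂ := fun p => if 3 ∣ p.1 + 2 * p.2 then v ^ (p.1 + p.2) else 0 with hFdef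
  have hFsum : Summable F := by
    refine Summable.of_norm_bounded hg (fun p => ?_)
    rw [← pow_add]
    simp only [F]
    split
    · rw [norm_pow]
    · simp [pow_nonneg (norm_nonneg v)]
  -- rewrite the target function in terms of F
  have hfun : (fun p : ℕ × ℕ =>
      if 3 ∣ p.1 + 2 * p.2 ∧ p ≠ (0, 0) then v ^ (p.1 + p.2) else 0)
      = fun p => if p = (0, 0) then 0 else F p := by
    funext p
    by_cases h0 : p = (0, 0)
    · simp [h0]
    · by_cases h3 : 3 ∣ p.1 + 2 * p.2 <;> simp [F, h0, h3]
  have hsplit : ∑' p : ℕ × ℕ,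
      (if 3 ∣ p.1 + 2 * p.2 ∧ p ≠ (0, 0) then v ^ (p.1 + p.2) else 0)
      = (∑' p, F p) - 1 := by
    rw [hfun]
    have h := Summable.tsum_eq_add_tsum_ite hFsum ((0, 0) : ℕ × ℕ)
    have hF0 : F (0, 0) = 1 := by simp [F]
    rw [hF0] at h
    rw [h]; ring
  -- reindex F by (r, a, b) ↦ (3a + r, 3b + r)
  set e : Fin 3 × ℕ × ℕ → ℕ × ℕ :=
    fun x => (3 * x.2.1 + x.1.1, 3 * x.2.2 + x.1.1) with hedef
  have he_inj : Function.Injective e := by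
    rintro ⟨r, a, b⟩ ⟨r', a', b'⟩ h
    simp only [e, Prod.mk.injEq] at h
    have hr := r.2; have hr' := r'.2
    have : r.1 = r'.1 ∧ a = a' ∧ b = b' := by omega
    exact Prod.ext (Fin.ext this.1) (Prod.ext this.2.1 this.2.2)
  have hsupp : Function.support F ⊆ Set.range e := by
    intro p hp
    simp only [Function.mem_support, F] at hp
    by_cases h3 : 3 ∣ p.1 + 2 * p.2
    · refine ⟨(⟨p.1 % 3, by omega⟩, p.1 / 3, p.2 / 3), ?_⟩
      simp only [e]
      have h1 : 3 * (p.1 / 3) + p.1 % 3 = p.1 := by omega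
      have h2 : 3 * (p.2 / 3) + p.1 % 3 = p.2 := by omega
      exact Prod.ext h1 h2
    · simp [h3] at hp
  have hreindex : ∑' x : Fin 3 × ℕ × ℕ, F (e x) = ∑' p, F p :=
    he_inj.tsum_eq hsupp
  -- compute F ∘ e
  have hFe : ∀ x : Fin 3 × ℕ × ℕ,
      F (e x) = v ^ (2 * (x.1 : ℕ)) * ((v ^ 3) ^ x.2.1 * (v ^ 3) ^ x.2.2) := by
    rintro ⟨r, a, b⟩
    simp only [F, e]
    rw [if_pos (by omega)]
    rw [← pow_mul, ← pow_mul, ← pow_add, ← pow_add]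
    ring_nf
  -- summability facts for v^3
  have hv3 : ‖v ^ 3‖ < 1 := by
    rw [norm_pow]
    exact pow_lt_one₀ (norm_nonneg v) hv (by norm_num)
  have hv3n : Summable (fun n : ℕ => ‖(v ^ 3) ^ n‖) := by
    simpa [norm_pow] using
      summable_geometric_of_lt_one (norm_nonneg (v ^ 3)) hv3
  have hv3s : Summable (fun n : ℕ => (v ^ 3) ^ n) := hv3n.of_norm
  have hinner : ∑' q : ℕ × ℕ, ((v ^ 3) ^ q.1 * (v ^ 3) ^ q.2)
      = (1 - v ^ 3)⁻¹ * (1 - v ^ 3)⁻¹ := by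
    rw [← tsum_mul_tsum_of_summable_norm hv3n hv3n,
      tsum_geometric_of_norm_lt_one hv3]
  -- sum over the reindexed set
  have hFe_sum : Summable fun x : Fin 3 × ℕ × ℕ => F (e x) :=
    hFsum.comp_injective he_inj
  have htsumF : ∑' p, F p
      = (1 + v ^ 2 + v ^ 4) * ((1 - v ^ 3)⁻¹ * (1 - v ^ 3)⁻¹) := by
    rw [← hreindex, Summable.tsum_prod hFe_sum, tsum_fintype]
    have : ∀ r : Fin 3, ∑' q : ℕ × ℕ, F (e (r, q))
        = v ^ (2 * (r : ℕ)) * ((1 - v ^ 3)⁻¹ * (1 - v ^ 3)⁻¹) := by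
      intro r
      have : ∀ q : ℕ × ℕ, F (e (r, q))
          = v ^ (2 * (r : ℕ)) * ((v ^ 3) ^ q.1 * (v ^ 3) ^ q.2) := fun q => hFe (r, q)
      calc ∑' q : ℕ × ℕ, F (e (r, q))
          = ∑' q : ℕ × ℕ, v ^ (2 * (r : ℕ)) * ((v ^ 3) ^ q.1 * (v ^ 3) ^ q.2) := by
            exact tsum_congr this
        _ = v ^ (2 * (r : ℕ)) * ∑' q : ℕ × ℕ, ((v ^ 3) ^ q.1 * (v ^ 3) ^ q.2) :=
            tsum_mul_left
        _ = v ^ (2 * (r : ℕ)) * ((1 - v ^ 3)⁻¹ * (1 - v ^ 3)⁻¹) := by rw [hinner]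
    calc ∑ r : Fin 3, ∑' q : ℕ × ℕ, F (e (r, q))
        = ∑ r : Fin 3, v ^ (2 * (r : ℕ)) * ((1 - v ^ 3)⁻¹ * (1 - v ^ 3)⁻¹) := by
          exact Finset.sum_congr rfl fun r _ => this r
      _ = (1 + v ^ 2 + v ^ 4) * ((1 - v ^ 3)⁻¹ * (1 - v ^ 3)⁻¹) := by
          simp [Fin.sum_univ_succ]
          ring
  -- final algebra
  have h1 : (1 - v) ≠ 0 := by
    intro h
    have : v = 1 := by linear_combination -h
    rw [this] at hv; simp at hv
  have h2 : (1 + v + v ^ 2) ≠ 0 := by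
    intro h
    have hv31 : v ^ 3 = 1 := by linear_combination (v - 1) * h
    rw [hv31] at hv3; simp at hv3
  have h3 : (1 - v ^ 3) ≠ 0 := by
    intro h
    have : v ^ 3 = 1 := by linear_combination -h
    rw [this] at hv3; simp at hv3
  rw [hsplit, htsumF]
  field_simp
  ring
end
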